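/- Recursion for the partial derivatives of the Version 2 cost (Lemma 'diff2'): for all x ∈ ℝ^{N+1} and all n ∈ {0,…,N−1}, the partial derivatives of C⁽²⁾ satisfy ∂C⁽²⁾/∂xₙ(x) = Dₙ⁺ + [ā(Dₙ⁺)·f(D_{n+1})·(1 − τρ̄′(Dₙ⁺)Dₙ⁺)/f(Dₙ⁺)]·[∂C⁽²⁾/∂x_{n+1}(x) − D_{n+1}], where Dₙ⁺ and D_{n+1} are evaluated along the dynamics determined by x. -/

import Mathlib

open Real Filter Finset

/-- `Fi f x = F(x) = ∫₀ˣ f(y) dy`. -/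
noncomputable def Fi (f : ℝ → ℝ) (x : ℝ) : ℝ := ∫ y in (0:ℝ)..x, f y

/-- `Ft f x = F̃(x) = ∫₀ˣ y f(y) dy`. -/
noncomputable def Ft (f : ℝ → ℝ) (x : ℝ) : ℝ := ∫ y in (0:ℝ)..x, y * f y

/-- `Gf f Finv = G = F̃ ∘ F⁻¹`. -/
noncomputable def Gf (f Finv : ℝ → ℝ) (x : ℝ) : ℝ := Ft f (Finv x)

/-- `ab τ ρ x = ā(x) = exp(−τ ρ̄(x))`. -/
noncomputable def ab (τ : ℝ) (ρ : ℝ → ℝ) (x : ℝ) : ℝ := Real.exp (-(τ * ρ x))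

/-- Version 2 dynamics: `D₀ = 0`, `Dₙ⁺ = F⁻¹(F(Dₙ) + xₙ)`, `D_{n+1} = ā(Dₙ⁺)·Dₙ⁺`. -/
noncomputable def Dv (f Finv : ℝ → ℝ) (τ : ℝ) (ρ : ℝ → ℝ) (x : ℕ → ℝ) : ℕ → ℝ
  | 0 => 0
  | n + 1 =>
      ab τ ρ (Finv (Fi f (Dv f Finv τ ρ x n) + x n)) * Finv (Fi f (Dv f Finv τ ρ x n) + x n)

/-- Version 2 cost functional `C⁽²⁾`. -/
noncomputable def C2 (f Finv : ℝ → ℝ) (τ : ℝ) (ρ : ℝ → ℝ) (N : ℕ) (x : ℕ → ℝ) : ℝ :=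
  ∑ n ∈ Finset.range (N + 1),
    (Gf f Finv (x n + Fi f (Dv f Finv τ ρ x n)) - Ft f (Dv f Finv τ ρ x n))

/-- `Dₙ⁺ = F⁻¹(F(Dₙ) + xₙ)`, the price impact just after the `n`-th trade. -/
noncomputable def Dvp (f Finv : ℝ → ℝ) (τ : ℝ) (ρ : ℝ → ℝ) (x : ℕ → ℝ) (n : ℕ) : ℝ :=
  Finv (Fi f (Dv f Finv τ ρ x n) + x n)

/-- Recursion for the partial derivatives of the Version 2 cost:
`∂C⁽²⁾/∂xₙ = Dₙ⁺ + [ā(Dₙ⁺)f(D_{n+1})(1 − τρ̄′(Dₙ⁺)Dₙ⁺)/f(Dₙ⁺)]·[∂C⁽²⁾/∂x_{n+1} − D_{n+1}]`. -/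
lemma hFi (f : ℝ → ℝ) (hf : Continuous f) (a : ℝ) : HasDerivAt (Fi f) (f a) a :=
  intervalIntegral.integral_hasDerivAt_right (hf.intervalIntegrable _ _)
    (hf.stronglyMeasurableAtFilter _ _) hf.continuousAt

lemma FiMono (f : ℝ → ℝ) (hf : Continuous f) (hfpos : ∀ x, 0 < f x) : StrictMono (Fi f) := by
  apply strictMono_of_deriv_pos
  intro x
  rw [(hFi f hf x).deriv]
  exact hfpos x

lemma hFinvC (f Finv : ℝ → ℝ) (hf : Continuous f) (hfpos : ∀ x, 0 < f x)
    (hFinv₁ : ∀ x, Fi f (Finv x) = x) : Continuous Finv := by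
  have hs : Function.Surjective (Fi f) := fun y => ⟨Finv y, hFinv₁ y⟩
  have hm := FiMono f hf hfpos
  let e := hm.orderIsoOfSurjective _ hs
  have : Finv = ⇑e.symm := by
    funext y
    apply hm.injective
    rw [hFinv₁]
    have : Fi f (e.symm y) = e (e.symm y) := rfl
    rw [this, e.apply_symm_apply]
  rw [this]
  exact (OrderIso.continuous e.symm)

lemma hFinvD (f Finv : ℝ → ℝ) (hf : Continuous f) (hfpos : ∀ x, 0 < f x)
    (hFinv₁ : ∀ x, Fi f (Finv x) = x) (a : ℝ) :
    HasDerivAt Finv (f (Finv a))⁻¹ a :=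
  HasDerivAt.of_local_left_inverse (hFinvC f Finv hf hfpos hFinv₁).continuousAt
    (hFi f hf (Finv a)) (hfpos _).ne' (Filter.Eventually.of_forall hFinv₁)

lemma hFt (f : ℝ → ℝ) (hf : Continuous f) (a : ℝ) : HasDerivAt (Ft f) (a * f a) a := by
  have h : Continuous (fun y => y * f y) := continuous_id.mul hf
  exact intervalIntegral.integral_hasDerivAt_right (h.intervalIntegrable _ _)
    (h.stronglyMeasurableAtFilter _ _) h.continuousAt

lemma hGf (f Finv : ℝ → ℝ) (hf : Continuous f) (hfpos : ∀ x, 0 < f x)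
    (hFinv₁ : ∀ x, Fi f (Finv x) = x) (a : ℝ) :
    HasDerivAt (Gf f Finv) (Finv a) a := by
  have h : HasDerivAt (Ft f ∘ Finv) (Finv a * f (Finv a) * (f (Finv a))⁻¹) a := (hFt f hf (Finv a)).comp a (hFinvD f Finv hf hfpos hFinv₁ a)
  convert h using 1
  · rfl
  rw [mul_assoc, mul_inv_cancel₀ (hfpos (Finv a)).ne', mul_one]

lemma hab (τ : ℝ) (ρ : ℝ → ℝ) (hρ : ContDiff ℝ 1 ρ) (a : ℝ) :
    HasDerivAt (ab τ ρ) (ab τ ρ a * (-(τ * deriv ρ a))) a := by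
  have hρd : HasDerivAt ρ (deriv ρ a) a := (hρ.differentiable one_ne_zero a).hasDerivAt
  exact ((hρd.const_mul τ).neg).exp

lemma habmul (τ : ℝ) (ρ : ℝ → ℝ) (hρ : ContDiff ℝ 1 ρ) (a : ℝ) :
    HasDerivAt (fun d => ab τ ρ d * d) (ab τ ρ a * (1 - τ * deriv ρ a * a)) a := by
  have h : HasDerivAt (fun d => ab τ ρ d * id d) (ab τ ρ a * -(τ * deriv ρ a) * id a + ab τ ρ a * 1) a :=
    (hab τ ρ hρ a).mul (hasDerivAt_id a)
  convert h using 1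
  · rfl
  change ab τ ρ a * (1 - τ * deriv ρ a * a) = ab τ ρ a * -(τ * deriv ρ a) * a + ab τ ρ a * 1
  ring

noncomputable def DvF (f Finv : ℝ → ℝ) (τ : ℝ) (ρ : ℝ → ℝ) (x : ℕ → ℝ) (d : ℝ) : ℕ → ℝ
  | 0 => d
  | n + 1 =>
      ab τ ρ (Finv (Fi f (DvF f Finv τ ρ x d n) + x n)) *
        Finv (Fi f (DvF f Finv τ ρ x d n) + x n)

/-- tail cost -/

noncomputable def Ct (f Finv : ℝ → ℝ) (τ : ℝ) (ρ : ℝ → ℝ) (x : ℕ → ℝ) (M : ℕ) (d : ℝ) : ℝ :=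
  ∑ k ∈ Finset.range M,
    (Gf f Finv (x k + Fi f (DvF f Finv τ ρ x d k)) - Ft f (DvF f Finv τ ρ x d k))

lemma Dv_eq_DvF (f Finv : ℝ → ℝ) (τ : ℝ) (ρ : ℝ → ℝ) (x : ℕ → ℝ) :
    ∀ k, Dv f Finv τ ρ x k = DvF f Finv τ ρ x 0 k := by
  intro k
  induction k with
  | zero => rfl
  | succ n ih => simp only [Dv, DvF, ih]

lemma DvF_shift (f Finv : ℝ → ℝ) (τ : ℝ) (ρ : ℝ → ℝ) (x : ℕ → ℝ) (d : ℝ) (m : ℕ) :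
    ∀ j, DvF f Finv τ ρ x d (m + j) =
      DvF f Finv τ ρ (fun i => x (m + i)) (DvF f Finv τ ρ x d m) j := by
  intro j
  induction j with
  | zero => rfl
  | succ n ih =>
    show DvF f Finv τ ρ x d ((m + n) + 1) = _
    simp only [DvF, ih]

lemma DvF_diff (f Finv : ℝ → ℝ) (hf : Continuous f) (hfpos : ∀ x, 0 < f x)
    (hFinv₁ : ∀ x, Fi f (Finv x) = x)
    (τ : ℝ) (ρ : ℝ → ℝ) (hρ : ContDiff ℝ 1 ρ) (x : ℕ → ℝ) :
    ∀ k, Differentiable ℝ (fun d => DvF f Finv τ ρ x d k) := by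
  intro k
  induction k with
  | zero => exact differentiable_id
  | succ n ih =>
    simp only [DvF]
    intro d
    have h1 : DifferentiableAt ℝ (fun d => Fi f (DvF f Finv τ ρ x d n) + x n) d :=
      (((hFi f hf _).differentiableAt.comp d (ih d))).add_const _
    have h2 : DifferentiableAt ℝ (fun d => Finv (Fi f (DvF f Finv τ ρ x d n) + x n)) d :=
      (hFinvD f Finv hf hfpos hFinv₁ _).differentiableAt.comp d h1
    exact ((habmul τ ρ hρ _).differentiableAt.comp d h2 : _)

lemma Ct_diff (f Finv : ℝ → ℝ) (hf : Continuous f) (hfpos : ∀ x, 0 < f x)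
    (hFinv₁ : ∀ x, Fi f (Finv x) = x)
    (τ : ℝ) (ρ : ℝ → ℝ) (hρ : ContDiff ℝ 1 ρ) (x : ℕ → ℝ) (M : ℕ) :
    Differentiable ℝ (Ct f Finv τ ρ x M) := by
  apply Differentiable.fun_sum
  intro k _
  apply Differentiable.sub
  · intro d
    exact (hGf f Finv hf hfpos hFinv₁ _).differentiableAt.comp d
      (((hFi f hf _).differentiableAt.comp d
        (DvF_diff f Finv hf hfpos hFinv₁ τ ρ hρ x k d)).const_add _)
  · intro d
    exact (hFt f hf _).differentiableAt.comp d (DvF_diff f Finv hf hfpos hFinv₁ τ ρ hρ x k d)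

lemma C2_decomp (f Finv : ℝ → ℝ) (τ : ℝ) (ρ : ℝ → ℝ) (N : ℕ) (y : ℕ → ℝ) (m : ℕ)
    (hm : m ≤ N + 1) :
    C2 f Finv τ ρ N y =
      (∑ k ∈ Finset.range m,
        (Gf f Finv (y k + Fi f (Dv f Finv τ ρ y k)) - Ft f (Dv f Finv τ ρ y k))) +
      Ct f Finv τ ρ (fun i => y (m + i)) (N + 1 - m) (Dv f Finv τ ρ y m) := by
  have hNm : N + 1 = m + (N + 1 - m) := by omega
  rw [C2, hNm, Finset.sum_range_add]
  congr 1
  rw [Ct]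
  simp only [Nat.add_sub_cancel_left]
  apply Finset.sum_congr rfl
  intro k _
  have h : Dv f Finv τ ρ y (m + k) =
      DvF f Finv τ ρ (fun i => y (m + i)) (Dv f Finv τ ρ y m) k := by
    rw [Dv_eq_DvF, DvF_shift, ← Dv_eq_DvF]
  rw [h]

lemma Ct_step (f Finv : ℝ → ℝ) (τ : ℝ) (ρ : ℝ → ℝ) (x : ℕ → ℝ) (M : ℕ) (d : ℝ) :
    Ct f Finv τ ρ x (M + 1) d =
      (Gf f Finv (x 0 + Fi f d) - Ft f d) +
      Ct f Finv τ ρ (fun i => x (1 + i)) M (DvF f Finv τ ρ x d 1) := by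
  have h1 : M + 1 = 1 + M := by omega
  rw [Ct, h1, Finset.sum_range_add, Finset.sum_range_one]
  congr 1
  rw [Ct]
  apply Finset.sum_congr rfl
  intro k _
  rw [DvF_shift]

lemma Dv_congr (f Finv : ℝ → ℝ) (τ : ℝ) (ρ : ℝ → ℝ) (x y : ℕ → ℝ) :
    ∀ k, (∀ i < k, x i = y i) → Dv f Finv τ ρ x k = Dv f Finv τ ρ y k := by
  intro k
  induction k with
  | zero => intro _; rfl
  | succ n ih =>
    intro h
    simp only [Dv, ih (fun i hi => h i (Nat.lt_succ_of_lt hi)), h n (Nat.lt_succ_self n)]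

lemma C2_deriv_formula (f Finv : ℝ → ℝ) (hf : Continuous f) (hfpos : ∀ x, 0 < f x)
    (hFinv₁ : ∀ x, Fi f (Finv x) = x)
    (τ : ℝ) (ρ : ℝ → ℝ) (hρ : ContDiff ℝ 1 ρ) (N : ℕ) (x : ℕ → ℝ) (n : ℕ) (hn : n ≤ N) :
    deriv (fun t : ℝ => C2 f Finv τ ρ N (Function.update x n t)) (x n) =
      Dvp f Finv τ ρ x n +
        deriv (Ct f Finv τ ρ (fun i => x (n + 1 + i)) (N - n)) (Dv f Finv τ ρ x (n + 1)) *
          (ab τ ρ (Dvp f Finv τ ρ x n) *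
            (1 - τ * deriv ρ (Dvp f Finv τ ρ x n) * Dvp f Finv τ ρ x n) *
            (f (Dvp f Finv τ ρ x n))⁻¹) := by
  set c := Fi f (Dv f Finv τ ρ x n) with hc
  set A := ∑ k ∈ Finset.range n,
      (Gf f Finv (x k + Fi f (Dv f Finv τ ρ x k)) - Ft f (Dv f Finv τ ρ x k)) with hA
  set x' : ℕ → ℝ := fun i => x (n + 1 + i) with hx'
  have hDvu : ∀ t : ℝ, ∀ k ≤ n, Dv f Finv τ ρ (Function.update x n t) k = Dv f Finv τ ρ x k := by
    intro t k hk
    exact Dv_congr f Finv τ ρ _ _ k (fun i hi => Function.update_of_ne (by omega) _ _)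
  have hfun : (fun t : ℝ => C2 f Finv τ ρ N (Function.update x n t)) =
      fun t : ℝ => A + (Gf f Finv (t + c) - Ft f (Dv f Finv τ ρ x n)) +
        Ct f Finv τ ρ x' (N - n)
          (ab τ ρ (Finv (c + t)) * Finv (c + t)) := by
    funext t
    rw [C2_decomp f Finv τ ρ N (Function.update x n t) (n + 1) (by omega)]
    congr 1
    · rw [Finset.sum_range_succ]
      congr 1
      · apply Finset.sum_congr rfl
        intro k hk
        simp only [Finset.mem_range] at hk
        rw [hDvu t k (le_of_lt hk), Function.update_of_ne (by omega)]
      · rw [hDvu t n le_rfl, Function.update_self, ← hc]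
    · have hcount : N + 1 - (n + 1) = N - n := by omega
      have hsh : (fun i => Function.update x n t (n + 1 + i)) = x' := by
        funext i
        exact Function.update_of_ne (by omega) _ _
      have hpt : Dv f Finv τ ρ (Function.update x n t) (n + 1) =
          ab τ ρ (Finv (c + t)) * Finv (c + t) := by
        simp only [Dv, hDvu t n le_rfl, Function.update_self, ← hc]
      rw [hcount, hsh, hpt]
  rw [hfun]
  set P := Dvp f Finv τ ρ x n with hP
  have hcP : Finv (c + x n) = P := rfl
  have hstep : HasDerivAt (fun t : ℝ => ab τ ρ (Finv (c + t)) * Finv (c + t))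
      (ab τ ρ P * (1 - τ * deriv ρ P * P) * ((f P)⁻¹ * 1)) (x n) := by
    have h1 : HasDerivAt (fun t : ℝ => c + t) 1 (x n) := (hasDerivAt_id (x n)).const_add c
    have h2 := (hFinvD f Finv hf hfpos hFinv₁ (c + x n)).comp (x n) h1
    have h3 := (habmul τ ρ hρ (Finv (c + x n))).comp (x n) h2
    rw [hcP] at h3
    exact h3
  have hstepval : ab τ ρ (Finv (c + x n)) * Finv (c + x n) = Dv f Finv τ ρ x (n + 1) := by
    simp only [Dv, hc]
  have hCt : HasDerivAt
      (fun t : ℝ => Ct f Finv τ ρ x' (N - n) (ab τ ρ (Finv (c + t)) * Finv (c + t)))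
      (deriv (Ct f Finv τ ρ x' (N - n)) (Dv f Finv τ ρ x (n + 1)) *
        (ab τ ρ P * (1 - τ * deriv ρ P * P) * ((f P)⁻¹ * 1))) (x n) := by
    have hd := (Ct_diff f Finv hf hfpos hFinv₁ τ ρ hρ x' (N - n)
      (Dv f Finv τ ρ x (n + 1))).hasDerivAt
    rw [← hstepval] at hd
    exact hd.comp (x n) hstep
  have hG : HasDerivAt (fun t : ℝ => Gf f Finv (t + c)) (Finv (x n + c)) (x n) := by
    have h1 : HasDerivAt (fun t : ℝ => t + c) 1 (x n) := (hasDerivAt_id (x n)).add_const c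
    have h2 : HasDerivAt (Gf f Finv ∘ fun t => t + c) (Finv (x n + c) * 1) (x n) :=
      (hGf f Finv hf hfpos hFinv₁ (x n + c)).comp (x n) h1
    rw [mul_one] at h2
    exact h2
  have htot : HasDerivAt
      (fun t : ℝ => A + (Gf f Finv (t + c) - Ft f (Dv f Finv τ ρ x n)) +
        Ct f Finv τ ρ x' (N - n) (ab τ ρ (Finv (c + t)) * Finv (c + t)))
      (Finv (x n + c) +
        deriv (Ct f Finv τ ρ x' (N - n)) (Dv f Finv τ ρ x (n + 1)) *
          (ab τ ρ P * (1 - τ * deriv ρ P * P) * ((f P)⁻¹ * 1))) (x n) := by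
    exact ((hG.sub_const (Ft f (Dv f Finv τ ρ x n))).const_add A).add hCt
  rw [htot.deriv]
  rw [add_comm (x n) c, hcP]
  ring

lemma Ct_deriv_step (f Finv : ℝ → ℝ) (hf : Continuous f) (hfpos : ∀ x, 0 < f x)
    (hFinv₁ : ∀ x, Fi f (Finv x) = x)
    (τ : ℝ) (ρ : ℝ → ℝ) (hρ : ContDiff ℝ 1 ρ) (x' : ℕ → ℝ) (M : ℕ) (d : ℝ) :
    deriv (Ct f Finv τ ρ x' (M + 1)) d =
      Finv (x' 0 + Fi f d) * f d - d * f d +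
        deriv (Ct f Finv τ ρ (fun i => x' (1 + i)) M) (DvF f Finv τ ρ x' d 1) *
          (ab τ ρ (Finv (Fi f d + x' 0)) *
            (1 - τ * deriv ρ (Finv (Fi f d + x' 0)) * Finv (Fi f d + x' 0)) *
            ((f (Finv (Fi f d + x' 0)))⁻¹ * f d)) := by
  have hfun : Ct f Finv τ ρ x' (M + 1) =
      fun e : ℝ => (Gf f Finv (x' 0 + Fi f e) - Ft f e) +
        Ct f Finv τ ρ (fun i => x' (1 + i)) M
          (ab τ ρ (Finv (Fi f e + x' 0)) * Finv (Fi f e + x' 0)) := by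
    funext e
    rw [Ct_step]
    rfl
  rw [hfun]
  set Q := Finv (Fi f d + x' 0) with hQ
  have hFid := hFi f hf d
  have hG2 : HasDerivAt (fun e : ℝ => Gf f Finv (x' 0 + Fi f e)) (Finv (x' 0 + Fi f d) * f d) d :=
    HasDerivAt.comp (h₂ := Gf f Finv) d (hGf f Finv hf hfpos hFinv₁ (x' 0 + Fi f d)) (hFid.const_add (x' 0))
  have hQd : HasDerivAt (fun e : ℝ => Finv (Fi f e + x' 0)) ((f Q)⁻¹ * f d) d :=
    (hFinvD f Finv hf hfpos hFinv₁ (Fi f d + x' 0)).comp d (hFid.add_const (x' 0))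
  have hstep2 : HasDerivAt
      (fun e : ℝ => ab τ ρ (Finv (Fi f e + x' 0)) * Finv (Fi f e + x' 0))
      (ab τ ρ Q * (1 - τ * deriv ρ Q * Q) * ((f Q)⁻¹ * f d)) d :=
    HasDerivAt.comp (h₂ := fun d => ab τ ρ d * d) d (habmul τ ρ hρ Q) hQd
  have hstepval : ab τ ρ (Finv (Fi f d + x' 0)) * Finv (Fi f d + x' 0) =
      DvF f Finv τ ρ x' d 1 := rfl
  have hCt2 : HasDerivAt
      (fun e : ℝ => Ct f Finv τ ρ (fun i => x' (1 + i)) M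
        (ab τ ρ (Finv (Fi f e + x' 0)) * Finv (Fi f e + x' 0)))
      (deriv (Ct f Finv τ ρ (fun i => x' (1 + i)) M) (DvF f Finv τ ρ x' d 1) *
        (ab τ ρ Q * (1 - τ * deriv ρ Q * Q) * ((f Q)⁻¹ * f d))) d := by
    have hd := (Ct_diff f Finv hf hfpos hFinv₁ τ ρ hρ (fun i => x' (1 + i)) M
      (DvF f Finv τ ρ x' d 1)).hasDerivAt
    rw [← hstepval] at hd
    exact hd.comp d hstep2
  exact (((hG2.sub (hFt f hf d)).add hCt2)).deriv

theorem C2_partial_deriv_recursion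
    (f Finv : ℝ → ℝ) (hf : Continuous f) (hfpos : ∀ x, 0 < f x)
    (htop : Tendsto (Fi f) atTop atTop) (hbot : Tendsto (Fi f) atBot atBot)
    (hFinv₁ : ∀ x, Fi f (Finv x) = x) (hFinv₂ : ∀ x, Finv (Fi f x) = x)
    (τ : ℝ) (hτ : 0 < τ) (ρ : ℝ → ℝ) (hρ : ContDiff ℝ 1 ρ)
    (N : ℕ) (hN : 1 ≤ N) :
    ∀ (x : ℕ → ℝ) (n : ℕ), n < N →
      deriv (fun t : ℝ => C2 f Finv τ ρ N (Function.update x n t)) (x n) =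
        Dvp f Finv τ ρ x n +
          (ab τ ρ (Dvp f Finv τ ρ x n) * f (Dv f Finv τ ρ x (n + 1)) *
              (1 - τ * deriv ρ (Dvp f Finv τ ρ x n) * Dvp f Finv τ ρ x n) /
            f (Dvp f Finv τ ρ x n)) *
          (deriv (fun t : ℝ => C2 f Finv τ ρ N (Function.update x (n + 1) t)) (x (n + 1)) -
            Dv f Finv τ ρ x (n + 1)) := by
  intro x n hn
  have h1 := C2_deriv_formula f Finv hf hfpos hFinv₁ τ ρ hρ N x n (le_of_lt hn)
  have h2 := C2_deriv_formula f Finv hf hfpos hFinv₁ τ ρ hρ N x (n + 1) hn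
  have hM : N - n = (N - n - 1) + 1 := by omega
  have h3 := Ct_deriv_step f Finv hf hfpos hFinv₁ τ ρ hρ (fun i => x (n + 1 + i)) (N - n - 1)
    (Dv f Finv τ ρ x (n + 1))
  rw [← hM] at h3
  have hsh : (fun i => (fun i => x (n + 1 + i)) (1 + i)) = (fun i => x (n + 1 + 1 + i)) := by
    funext i
    exact congrArg x (by omega)
  have hc2 : N - n - 1 = N - (n + 1) := by omega
  have hDvF1 : DvF f Finv τ ρ (fun i => x (n + 1 + i)) (Dv f Finv τ ρ x (n + 1)) 1 =
      Dv f Finv τ ρ x (n + 2) := rfl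
  simp only [Nat.add_zero] at h3
  rw [hsh, hc2, hDvF1] at h3
  have hQ : Finv (Fi f (Dv f Finv τ ρ x (n + 1)) + x (n + 1)) = Dvp f Finv τ ρ x (n + 1) := rfl
  rw [add_comm (x (n + 1)) (Fi f (Dv f Finv τ ρ x (n + 1))), hQ] at h3
  rw [h1, h2, h3]
  have hfP := (hfpos (Dvp f Finv τ ρ x n)).ne'
  have hfQ := (hfpos (Dvp f Finv τ ρ x (n + 1))).ne'
  field_simp [hfP, hfQ]
  ring
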